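/- Let p ≥ 3, q ≥ 1 be integers and let η be a real number with 0 < η < 1/(7p⁵q). There exists n₀ such that for all n ≥ n₀: if G is an n-vertex B_{p,q}-free graph with e(G) ≥ e(T_{n,p}) − ⌊n/p⌋ + 1, then the set S = {v ∈ V(G) : d_G(v) ≤ ((p−1)/p − 5η)·n} satisfies |S| ≤ ηn. -/

import Mathlib

set_option maxHeartbeats 1000000

open SimpleGraph Finset

/-- `G` contains a copy of `H` as a subgraph. -/
def CopyIn {α β : Type*} (H : SimpleGraph α) (G : SimpleGraph β) : Prop :=
  ∃ f : α → β, Function.Injective f ∧ ∀ ⦃a b⦄, H.Adj a b → G.Adj (f a) (f b)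

/-- The complete split graph `B_{p,q} = K_p ∇ q K_1`. -/
def completeSplitGraph (p q : ℕ) : SimpleGraph (Fin (p + q)) where
  Adj i j := i ≠ j ∧ ((i : ℕ) < p ∨ (j : ℕ) < p)
  symm := ⟨fun _ _ h => ⟨h.1.symm, h.2.symm⟩⟩
  loopless := ⟨fun _ h => h.1 rfl⟩

section Aux

variable {n : ℕ} (G : SimpleGraph (Fin n)) [DecidableRel G.Adj]

/-- twice the number of edges inside `A` -/
def Wt (A : Finset (Fin n)) : ℕ := ∑ v ∈ A, #(A ∩ G.neighborFinset v)

lemma Wt_le (A : Finset (Fin n)) : Wt G A ≤ #A * (#A - 1) := by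
  classical
  refine (Finset.sum_le_card_nsmul A _ (#A - 1) fun v hv => ?_).trans_eq (by simp [mul_comm])
  have : A ∩ G.neighborFinset v ⊆ A.erase v := by
    intro x hx
    simp only [mem_inter, mem_neighborFinset] at hx
    exact Finset.mem_erase.2 ⟨fun h => G.loopless.irrefl v (h ▸ hx.2), hx.1⟩
  calc #(A ∩ G.neighborFinset v) ≤ #(A.erase v) := card_le_card this
    _ = #A - 1 := card_erase_of_mem hv

lemma Wt_erase (A : Finset (Fin n)) (v : Fin n) :
    Wt G A ≤ Wt G (A.erase v) + 2 * #(A ∩ G.neighborFinset v) := by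
  classical
  by_cases hv : v ∈ A
  · have h1 : Wt G A = (∑ u ∈ A.erase v, #(A ∩ G.neighborFinset u)) + #(A ∩ G.neighborFinset v) :=
      (Finset.sum_erase_add A _ hv).symm
    have h2 : ∀ u ∈ A.erase v,
        #(A ∩ G.neighborFinset u) ≤ #(A.erase v ∩ G.neighborFinset u) + (if G.Adj v u then 1 else 0) := by
      intro u hu
      by_cases hadj : G.Adj v u
      · simp only [hadj, if_true]
        have : A ∩ G.neighborFinset u ⊆ insert v (A.erase v ∩ G.neighborFinset u) := by
          intro x hx
          rcases eq_or_ne x v with rfl | hxv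
          · exact mem_insert_self _ _
          · simp only [mem_inter] at hx
            exact mem_insert_of_mem (mem_inter.2 ⟨mem_erase.2 ⟨hxv, hx.1⟩, hx.2⟩)
        exact (card_le_card this).trans (card_insert_le _ _)
      · simp only [hadj, if_false, add_zero]
        apply card_le_card
        intro x hx
        simp only [mem_inter, mem_neighborFinset] at hx ⊢
        refine ⟨mem_erase.2 ⟨fun h => hadj (h ▸ hx.2).symm, hx.1⟩, hx.2⟩
    have h3 : (∑ u ∈ A.erase v, #(A ∩ G.neighborFinset u)) ≤
        Wt G (A.erase v) + ∑ u ∈ A.erase v, (if G.Adj v u then 1 else 0) := by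
      rw [Wt, ← Finset.sum_add_distrib]
      exact Finset.sum_le_sum h2
    have h4 : (∑ u ∈ A.erase v, (if G.Adj v u then 1 else 0)) ≤ #(A ∩ G.neighborFinset v) := by
      rw [← Finset.card_filter]
      apply card_le_card
      intro x hx
      simp only [mem_filter, mem_erase] at hx
      exact mem_inter.2 ⟨hx.1.2, (mem_neighborFinset _ _ _).2 hx.2⟩
    omega
  · rw [Finset.erase_eq_of_notMem hv]; omega

lemma Wt_sdiff (A B : Finset (Fin n)) :
    Wt G A ≤ Wt G (A \ B) + ∑ v ∈ B, 2 * G.degree v := by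
  classical
  induction B using Finset.induction_on with
  | empty => simp
  | @insert v B hv ih =>
    rw [Finset.sum_insert hv, Finset.sdiff_insert]
    have h1 := Wt_erase G (A \ B) v
    have h2 : #((A \ B) ∩ G.neighborFinset v) ≤ G.degree v := by
      rw [← card_neighborFinset_eq_degree]
      exact card_le_card (inter_subset_right)
    omega

lemma extract (c : ℝ) (t : ℕ) (hc0 : 0 ≤ c) (hc1 : c < 1) (ht : 1 ≤ t) :
    ∀ A : Finset (Fin n),
      c * (#A : ℝ)^2 + (1 - c) * (t : ℝ)^2 + #A ≤ (Wt G A : ℝ) →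
      ∃ B ⊆ A, (t : ℝ) < (#B : ℝ) ∧
        ∀ v ∈ B, c * (#B : ℝ) ≤ (#(B ∩ G.neighborFinset v) : ℝ) := by
  intro A
  induction A using Finset.strongInduction with
  | _ A ih =>
    intro hW
    by_cases hgood : ∀ v ∈ A, c * (#A : ℝ) ≤ (#(A ∩ G.neighborFinset v) : ℝ)
    · refine ⟨A, subset_rfl, ?_, hgood⟩
      have hub : (Wt G A : ℝ) ≤ (#A : ℝ)^2 - #A := by
        have := Wt_le G A
        have h2 : (#A : ℝ) * (#A - 1) = (#A:ℝ)^2 - #A := by ring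
        rcases Nat.eq_zero_or_pos #A with h | h
        · have hA : A = ∅ := card_eq_zero.1 h
          subst hA
          simp [Wt]
        · calc (Wt G A : ℝ) ≤ (#A * (#A - 1) : ℕ) := by exact_mod_cast this
            _ = (#A : ℝ) * ((#A : ℝ) - 1) := by
                push_cast [Nat.cast_sub h]; ring
            _ = _ := h2
      have ht0 : (0:ℝ) < t := by exact_mod_cast ht
      by_contra hle
      push_neg at hle
      have h1 : (0:ℝ) ≤ 1 - c := by linarith
      have h2 : (0:ℝ) ≤ (t:ℝ) - #A := by linarith
      have h3 : (0:ℝ) ≤ (t:ℝ) + #A := by positivity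
      have h4 : (0:ℝ) ≤ (#A:ℝ) := Nat.cast_nonneg _
      have ht1 : (1:ℝ) ≤ (t:ℝ) := by exact_mod_cast ht
      have h5 : (1:ℝ) ≤ (t:ℝ)^2 := by nlinarith
      nlinarith [mul_nonneg (mul_nonneg h1 h2) h3, mul_nonneg h1 (by linarith : (0:ℝ) ≤ (t:ℝ)^2 - 1)]
    · push_neg at hgood
      obtain ⟨v, hvA, hv⟩ := hgood
      have hcard : (#(A.erase v) : ℝ) = (#A : ℝ) - 1 := by
        rw [card_erase_of_mem hvA]
        have : 1 ≤ #A := card_pos.2 ⟨v, hvA⟩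
        push_cast [Nat.cast_sub this]; ring
      have hW' : c * (#(A.erase v) : ℝ)^2 + (1 - c) * (t : ℝ)^2 + #(A.erase v) ≤
          (Wt G (A.erase v) : ℝ) := by
        have h1 := Wt_erase G A v
        have h1' : (Wt G A : ℝ) ≤ Wt G (A.erase v) + 2 * #(A ∩ G.neighborFinset v) := by
          exact_mod_cast h1
        rw [hcard]
        nlinarith
      obtain ⟨B, hBA, hB⟩ := ih (A.erase v) (Finset.erase_ssubset hvA) hW'
      exact ⟨B, hBA.trans (erase_subset _ _), hB⟩

lemma greedy (p : ℕ) (hp : 1 ≤ p) (c : ℝ) (hc1 : (1 - c) * p ≤ 1)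
    (B : Finset (Fin n)) (hB : 0 < #B)
    (hmin : ∀ v ∈ B, c * (#B : ℝ) ≤ (#(B ∩ G.neighborFinset v) : ℝ)) :
    ∀ j ≤ p, ∃ C D : Finset (Fin n), C ⊆ B ∧ D ⊆ B ∧ #C = j ∧
      (∀ u ∈ C, ∀ w ∈ C, u ≠ w → G.Adj u w) ∧
      (∀ w ∈ C, ∀ u ∈ D, G.Adj w u) ∧
      (#B : ℝ) * (1 - j * (1 - c)) ≤ (#D : ℝ) := by
  intro j
  induction j with
  | zero =>
    intro _
    exact ⟨∅, B, empty_subset _, subset_rfl, rfl, by simp, by simp, by simp⟩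
  | succ j ihj =>
    intro hjp
    obtain ⟨C, D, hCB, hDB, hCcard, hclique, hCD, hDcard⟩ := ihj (by omega)
    have hp0 : (0:ℝ) < p := by exact_mod_cast hp
    have h1c : 1 - c ≤ 1 / p := by rw [le_div_iff₀ hp0]; exact hc1
    have hBpos : (0:ℝ) < #B := by exact_mod_cast hB
    -- D is nonempty
    have hDpos : (0:ℝ) < #D := by
      have hj : (j : ℝ) ≤ (p : ℝ) - 1 := by
        have : j + 1 ≤ p := hjp
        have := (Nat.cast_le (α := ℝ)).2 this
        push_cast at this
        linarith
      have key : (1:ℝ) - j * (1 - c) ≥ 1 / p := by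
        rcases le_or_gt (1 - c) 0 with h | h
        · have : (j:ℝ) * (1 - c) ≤ 0 := mul_nonpos_of_nonneg_of_nonpos (by positivity) h
          have : (1:ℝ)/p ≤ 1 := by rw [div_le_one hp0]; exact_mod_cast hp
          linarith
        · have : (j:ℝ) * (1 - c) ≤ ((p:ℝ) - 1) * (1/p) := by
            apply mul_le_mul hj h1c h.le (by linarith)
          have hexp : ((p:ℝ) - 1) * (1/p) = 1 - 1/p := by field_simp
          linarith
      have : (0:ℝ) < (#B : ℝ) * (1/p) := by positivity
      nlinarith
    obtain ⟨v, hvD⟩ := Finset.card_pos.1 (by exact_mod_cast Nat.cast_pos.1 hDpos)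
    have hvB : v ∈ B := hDB hvD
    have hvC : v ∉ C := fun hvC => G.loopless.irrefl v (hCD v hvC v hvD)
    refine ⟨insert v C, D ∩ (B ∩ G.neighborFinset v), ?_, ?_, ?_, ?_, ?_, ?_⟩
    · exact insert_subset hvB hCB
    · exact (inter_subset_right).trans inter_subset_left
    · rw [card_insert_of_notMem hvC, hCcard]
    · intro u hu w hw huw
      rcases mem_insert.1 hu with hu1 | hu2 <;> rcases mem_insert.1 hw with hw1 | hw2
      · exact absurd (hu1.trans hw1.symm) huw
      · rw [hu1]; exact (hCD w hw2 v hvD).symm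
      · rw [hw1]; exact hCD u hu2 v hvD
      · exact hclique u hu2 w hw2 huw
    · intro w hw u hu
      rcases mem_insert.1 hw with rfl | hw
      · exact (mem_neighborFinset _ _ _).1 (mem_inter.1 (mem_inter.1 hu).2).2
      · exact hCD w hw u ((inter_subset_left) hu)
    · have hcap : (#D : ℝ) + #(B ∩ G.neighborFinset v) - #B ≤ #(D ∩ (B ∩ G.neighborFinset v)) := by
        have h := Finset.card_inter_add_card_union D (B ∩ G.neighborFinset v)
        have hsub : D ∪ (B ∩ G.neighborFinset v) ⊆ B := union_subset hDB inter_subset_left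
        have := card_le_card hsub
        have := (Nat.cast_le (α := ℝ)).2 this
        have heq := congrArg (Nat.cast (R := ℝ)) h
        push_cast at heq this ⊢
        linarith
      have hm := hmin v hvB
      push_cast
      nlinarith


end Aux

lemma turan_class_card (n p : ℕ) (hp : 1 ≤ p) (v : Fin n) :
    #(univ.filter (fun w : Fin n => (w:ℕ) % p = (v:ℕ) % p)) ≤ n / p + 1 := by
  have : #(Finset.range (n / p + 1)) = n / p + 1 := card_range _
  rw [← this]
  refine card_le_card_of_injOn (fun w : Fin n => (w:ℕ) / p) ?_ ?_
  · intro w hw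
    simp only [mem_coe, mem_range]
    have : (w:ℕ) / p ≤ n / p := Nat.div_le_div_right (le_of_lt w.isLt)
    omega
  · intro w1 h1 w2 h2 hdiv
    simp only [coe_filter, Set.mem_setOf_eq, mem_univ, true_and] at h1 h2
    simp only at hdiv
    have e1 := Nat.div_add_mod (w1:ℕ) p
    have e2 := Nat.div_add_mod (w2:ℕ) p
    rw [hdiv] at e1
    have : (w1:ℕ) = (w2:ℕ) := by omega
    exact Fin.ext this

lemma turan_degree (n p : ℕ) (hp : 1 ≤ p) (v : Fin n) :
    (n:ℝ) - (n / p : ℕ) - 1 ≤ ((turanGraph n p).degree v : ℝ) := by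
  have hcompl : (turanGraph n p).degree v
      + #(univ.filter (fun w : Fin n => (w:ℕ) % p = (v:ℕ) % p)) = n := by
    rw [← card_neighborFinset_eq_degree, neighborFinset_eq_filter]
    have : univ.filter ((turanGraph n p).Adj v)
        = univ.filter (fun w : Fin n => ¬ ((w:ℕ) % p = (v:ℕ) % p)) := by
      apply filter_congr
      intro w _
      constructor <;> intro h <;> simp [turanGraph] at * <;> omega
    rw [this, add_comm]
    rw [Finset.card_filter_add_card_filter_not]
    simp
  have hclass := turan_class_card n p hp v
  have h1 : (n:ℝ) = ((turanGraph n p).degree v : ℝ)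
      + #(univ.filter (fun w : Fin n => (w:ℕ) % p = (v:ℕ) % p)) := by exact_mod_cast hcompl.symm
  have h2 : (#(univ.filter (fun w : Fin n => (w:ℕ) % p = (v:ℕ) % p)) : ℝ) ≤ (n/p : ℕ) + 1 := by
    exact_mod_cast hclass
  linarith

lemma turan_edges (n p : ℕ) (hp : 1 ≤ p) :
    (n:ℝ) * ((n:ℝ) - (n / p : ℕ) - 1) ≤ 2 * (#(turanGraph n p).edgeFinset : ℝ) := by
  have hsum := sum_degrees_eq_twice_card_edges (turanGraph n p)
  have h1 : (n:ℝ) * ((n:ℝ) - (n / p : ℕ) - 1) ≤ (∑ v : Fin n, (turanGraph n p).degree v : ℕ) := by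
    push_cast
    calc (n:ℝ) * ((n:ℝ) - (n / p : ℕ) - 1)
        = ∑ _v : Fin n, ((n:ℝ) - (n / p : ℕ) - 1) := by
          rw [Finset.sum_const, card_univ, Fintype.card_fin, nsmul_eq_mul]
      _ ≤ ∑ v : Fin n, ((turanGraph n p).degree v : ℝ) :=
          Finset.sum_le_sum fun v _ => turan_degree n p hp v
  rw [hsum] at h1
  push_cast at h1 ⊢
  linarith

lemma key_ineq (N σ τ η P : ℝ) (hP : 3 ≤ P) (hη0 : 0 < η) (hη1 : η ≤ 1)
    (hσ1 : η*N ≤ σ) (hσ2 : σ ≤ η*N+1) (hτ1 : η^2*N ≤ τ) (hτ2 : τ ≤ η^2*N+1)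
    (hbig : 9000 ≤ η^4*N) (h2η : 2*η^2 ≤ 1/P) :
    (1 - 1/P + 2*η^2)*(N-σ)^2 + (1/P - 2*η^2)*τ^2 + (N-σ)
      ≤ (1 - 1/P)*N^2 - 2*N - 2*σ*((1 - 1/P) - 5*η)*N := by
  have hP0 : (0:ℝ) < P := by linarith
  have h1P : 1/P ≤ 1/3 := by
    rw [div_le_div_iff₀ hP0 (by norm_num)]; linarith
  have h1P0 : 0 < 1/P := by positivity
  have hN : 9000 ≤ N := by nlinarith [pow_le_one₀ hη0.le hη1 (n := 4), sq_nonneg (η^2)]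
  have hη2N : 9000 ≤ η^2*N := by nlinarith [sq_nonneg η, sq_nonneg (η*η)]
  have hηN : 9000 ≤ η*N := by nlinarith [sq_nonneg η]
  have hσ0 : 0 < σ := by linarith
  have hτ0 : 0 < τ := by nlinarith
  -- reduces to: 10ησN ≥ (1-1/P)σ² + 2η²(N-σ)² + (1/P-2η²)τ² + 2N + (N-σ)
  have hNσ : σ ≤ N := by nlinarith
  have e1 : (1 - 1/P)*σ^2 ≤ σ^2 := by nlinarith [sq_nonneg σ]
  have e2 : 2*η^2*(N-σ)^2 ≤ 2*η^2*N^2 := by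
    have h : (N-σ)^2 ≤ N^2 := by nlinarith
    have h2 : (0:ℝ) ≤ 2*η^2 := by positivity
    exact mul_le_mul_of_nonneg_left h h2
  have e3 : (1/P - 2*η^2)*τ^2 ≤ τ^2 := by
    have h : 1/P - 2*η^2 ≤ 1 := by nlinarith [sq_nonneg η]
    nlinarith [sq_nonneg τ]
  have e4 : σ^2 ≤ (η*N+1)^2 := by nlinarith
  have e5 : τ^2 ≤ (η*N+1)^2 := by nlinarith [sq_nonneg η]
  have e6 : 10*η*σ*N ≥ 10*(η*N)*(η*N) := by nlinarith
  have e7 : (η*N+1)^2 = (η*N)^2 + 2*(η*N) + 1 := by ring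
  have e8 : 6*(η*N)^2 ≥ 4*(η*N) + 3*N + 2 := by nlinarith
  nlinarith [e1, e2, e3, e4, e5, e6, e8]


/-- Lemma 2.4: for `p ≥ 3`, `q ≥ 1`, `0 < η < 1/(7p⁵q)` and `n` large, if `G` is an
`n`-vertex `B_{p,q}`-free graph with `e(G) ≥ e(T_{n,p}) - ⌊n/p⌋ + 1`, then the set
`S = {v : d_G(v) ≤ ((p-1)/p - 5η)n}` satisfies `|S| ≤ ηn`. -/
theorem stmt12 (p q : ℕ) (hp : 3 ≤ p) (hq : 1 ≤ q) (η : ℝ) (hη0 : 0 < η)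
    (hη : η < 1 / (7 * (p : ℝ) ^ 5 * q)) :
    ∃ n₀ : ℕ, ∀ n ≥ n₀, ∀ G : SimpleGraph (Fin n),
      ¬ CopyIn (completeSplitGraph p q) G →
      (turanGraph n p).edgeSet.ncard + 1 ≤ G.edgeSet.ncard + n / p →
      ({v : Fin n | ((G.neighborSet v).ncard : ℝ) ≤ (((p : ℝ) - 1) / p - 5 * η) * n}.ncard : ℝ)
        ≤ η * n := by
  classical
  refine ⟨⌈(9000 * (p:ℝ)^3 * q) / η^4⌉₊ + 1, ?_⟩
  intro n hn G hfree hedge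
  letI : DecidableRel G.Adj := Classical.decRel _
  by_contra hcon
  push_neg at hcon
  -- basic numeric facts
  have hpR : (3:ℝ) ≤ p := by exact_mod_cast hp
  have hqR : (1:ℝ) ≤ q := by exact_mod_cast hq
  have hp0 : (0:ℝ) < p := by linarith
  have hp1 : 1 ≤ p := by omega
  have hp5 : (1:ℝ) ≤ (p:ℝ)^5 := one_le_pow₀ (by linarith)
  have hpp5 : (p:ℝ) ≤ (p:ℝ)^5 := le_self_pow₀ (by linarith) (by norm_num)
  have hη1 : η ≤ 1 := by
    have h7 : (1:ℝ) ≤ 7 * (p:ℝ)^5 * q := by nlinarith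
    have := hη.le.trans ((div_le_one (by nlinarith)).2 h7)
    linarith
  have h2η' : 2*η^2 < 1/(p:ℝ) := by
    have hpq : 7 * (p:ℝ) * q ≤ 7 * (p:ℝ)^5 * q := by nlinarith
    have h7p : η < 1/(7*(p:ℝ)) := by
      have h1 : 1 / (7 * (p:ℝ)^5 * q) ≤ 1/(7*(p:ℝ)*q) := by
        apply div_le_div_of_nonneg_left (by norm_num) (by positivity) hpq
      have h2 : 1 / (7*(p:ℝ)*q) ≤ 1/(7*(p:ℝ)) := by
        apply div_le_div_of_nonneg_left (by norm_num) (by positivity)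
        nlinarith
      linarith
    have hp7 : 7*(p:ℝ)*η < 1 := by
      rw [lt_div_iff₀ (by positivity)] at h7p
      linarith
    have h49 : 49*(p:ℝ)^2*η^2 < 1 := by
      nlinarith [mul_pos (by linarith : (0:ℝ) < 1 - 7*(p:ℝ)*η)
        (by positivity : (0:ℝ) < 1 + 7*(p:ℝ)*η)]
    rw [lt_div_iff₀ hp0]
    nlinarith [h49, hpR, mul_pos hη0 hp0]
  have h2η : 2*η^2 ≤ 1/(p:ℝ) := h2η'.le
  -- n is large
  have hnn : (9000 * (p:ℝ)^3 * q) / η^4 ≤ n := by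
    have h1 : ((9000 * (p:ℝ)^3 * q) / η^4) ≤ (⌈(9000 * (p:ℝ)^3 * q) / η^4⌉₊ : ℝ) :=
      Nat.le_ceil _
    have h2 : (⌈(9000 * (p:ℝ)^3 * q) / η^4⌉₊ : ℝ) ≤ n := by
      exact_mod_cast Nat.le_of_succ_le hn
    linarith
  have hbigN : 9000 * (p:ℝ)^3 * q ≤ η^4 * n := by
    rw [div_le_iff₀ (by positivity)] at hnn
    linarith [hnn]
  have hp3 : (27:ℝ) ≤ (p:ℝ)^3 := by
    nlinarith [mul_nonneg (by linarith : (0:ℝ) ≤ (p:ℝ)-3)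
      (by positivity : (0:ℝ) ≤ (p:ℝ)^2+3*(p:ℝ)+9)]
  have hp3q : (27:ℝ) ≤ (p:ℝ)^3 * q := by nlinarith
  have hbig9 : 9000 ≤ η^4 * (n:ℝ) := by nlinarith
  have hnR0 : (0:ℝ) ≤ n := Nat.cast_nonneg n
  have hη4le1 : η^4 ≤ 1 := pow_le_one₀ hη0.le hη1
  have hN9000 : (9000:ℝ) ≤ n := by
    nlinarith [mul_nonneg (by linarith : (0:ℝ) ≤ 1 - η^4) hnR0]
  have hN0 : (0:ℝ) < n := by linarith
  -- edge count lower bound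
  have hedgeT : G.edgeSet.ncard = #G.edgeFinset := by
    rw [← coe_edgeFinset, Set.ncard_coe_finset]
  have hedgeT2 : (turanGraph n p).edgeSet.ncard = #(turanGraph n p).edgeFinset := by
    rw [← coe_edgeFinset, Set.ncard_coe_finset]
  have hedgeR : (#(turanGraph n p).edgeFinset : ℝ) + 1 ≤ (#G.edgeFinset : ℝ) + (n/p : ℕ) := by
    rw [hedgeT, hedgeT2] at hedge
    exact_mod_cast hedge
  have hdivle : ((n/p : ℕ) : ℝ) ≤ (n:ℝ)/p := Nat.cast_div_le
  have hTlow := turan_edges n p hp1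
  have heG : (1 - 1/(p:ℝ)) * n^2 - 2*n ≤ 2 * (#G.edgeFinset : ℝ) := by
    have h1 : (n:ℝ) * ((n:ℝ) - (n/p : ℕ) - 1) ≥ (n:ℝ)^2 - (n:ℝ)*((n:ℝ)/p) - n := by
      nlinarith [hdivle, hN0]
    have h2 : (n:ℝ)/p ≤ (n:ℝ)/3 := div_le_div_of_nonneg_left hnR0 (by norm_num) hpR
    have h3 : (1 - 1/(p:ℝ)) * n^2 = (n:ℝ)^2 - (n:ℝ)*((n:ℝ)/p) := by field_simp
    linarith [hedgeR, hTlow, hdivle, h1, h2]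
  -- the set S as a finset
  set S : Set (Fin n) :=
    {v : Fin n | ((G.neighborSet v).ncard : ℝ) ≤ (((p : ℝ) - 1) / p - 5 * η) * n} with hS
  have hSfin : S.Finite := Set.toFinite S
  set Sf : Finset (Fin n) := hSfin.toFinset with hSf
  have hScard : (S.ncard : ℝ) = #Sf := by
    rw [Set.ncard_eq_toFinset_card S hSfin]
  rw [hScard] at hcon
  -- choose S' of size s
  set s : ℕ := ⌈η * n⌉₊ with hs
  have hsSf : s ≤ #Sf := Nat.ceil_le.2 (by exact_mod_cast hcon.le)
  have hs1 : 1 ≤ s := Nat.one_le_ceil_iff.2 (by positivity)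
  obtain ⟨S', hS'sub, hS'card⟩ := Finset.exists_subset_card_eq hsSf
  have hsn : s ≤ n := by
    calc s ≤ #Sf := hsSf
      _ ≤ Fintype.card (Fin n) := card_le_univ _
      _ = n := Fintype.card_fin n
  have hsRlo : η * n ≤ (s:ℝ) := Nat.le_ceil _
  have hsRhi : (s:ℝ) ≤ η * n + 1 := (Nat.ceil_lt_add_one (by positivity)).le
  -- degrees in S are small
  have hdegS : ∀ v ∈ S', (G.degree v : ℝ) ≤ ((1:ℝ) - 1/p - 5*η) * n := by
    intro v hv
    have hvS : v ∈ S := (Set.Finite.mem_toFinset hSfin).1 (hS'sub hv)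
    have : ((G.neighborSet v).ncard : ℝ) ≤ (((p : ℝ) - 1) / p - 5 * η) * n := hvS
    have hns : (G.neighborSet v).ncard = G.degree v := by
      rw [Set.ncard_eq_toFinset_card', ← neighborFinset_def, card_neighborFinset_eq_degree]
    rw [hns] at this
    have hfrac : ((p : ℝ) - 1) / p = 1 - 1/p := by field_simp
    rw [hfrac] at this
    linarith
  -- W of the complement of S'
  set A₀ : Finset (Fin n) := univ \ S' with hA₀
  have hA₀card : #A₀ = n - s := by
    rw [hA₀, card_sdiff_of_subset (subset_univ _), card_univ, Fintype.card_fin, hS'card]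
  have hA₀R : (#A₀ : ℝ) = (n:ℝ) - s := by
    rw [hA₀card, Nat.cast_sub hsn]
  have hWuniv : Wt G univ = 2 * #G.edgeFinset := by
    rw [Wt]
    have : ∀ v : Fin n, #((univ : Finset (Fin n)) ∩ G.neighborFinset v) = G.degree v := by
      intro v
      rw [univ_inter, card_neighborFinset_eq_degree]
    rw [Finset.sum_congr rfl fun v _ => this v]
    exact sum_degrees_eq_twice_card_edges G
  have hWsd := Wt_sdiff G univ S'
  have hsumdeg : (∑ v ∈ S', 2 * G.degree v : ℝ) ≤ 2 * s * (((1:ℝ) - 1/p - 5*η) * n) := by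
    have h1 : (∑ v ∈ S', 2 * G.degree v : ℕ) = ∑ v ∈ S', (2 * G.degree v) := rfl
    push_cast
    calc (∑ v ∈ S', 2 * (G.degree v : ℝ))
        ≤ ∑ v ∈ S', 2 * (((1:ℝ) - 1/p - 5*η) * n) :=
          Finset.sum_le_sum fun v hv => by linarith [hdegS v hv]
      _ = 2 * s * (((1:ℝ) - 1/p - 5*η) * n) := by
          rw [Finset.sum_const, hS'card, nsmul_eq_mul]; ring
  have hWA₀ : 2 * (#G.edgeFinset : ℝ) - 2 * s * (((1:ℝ) - 1/p - 5*η) * n)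
      ≤ (Wt G A₀ : ℝ) := by
    have h1 : (Wt G univ : ℝ) ≤ (Wt G A₀ : ℝ) + (∑ v ∈ S', 2 * G.degree v : ℕ) := by
      exact_mod_cast hWsd
    have h2 : (Wt G univ : ℝ) = 2 * #G.edgeFinset := by exact_mod_cast hWuniv
    push_cast at h1 ⊢
    linarith [hsumdeg]
  -- apply extraction with c = 1 - 1/p + 2η², t = ⌈η²n⌉₊
  set c : ℝ := 1 - 1/(p:ℝ) + 2*η^2 with hc
  set t : ℕ := ⌈η^2 * n⌉₊ with ht
  have hc0 : 0 ≤ c := by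
    have : 1/(p:ℝ) ≤ 1/3 := by
      rw [div_le_div_iff₀ hp0 (by norm_num)]; linarith
    have : 0 ≤ η^2 := sq_nonneg η
    simp only [hc]; linarith
  have hclt1 : c < 1 := by
    have : 0 < 1/(p:ℝ) := by positivity
    simp only [hc]
    linarith [h2η']
  have ht1 : 1 ≤ t := Nat.one_le_ceil_iff.2 (by positivity)
  have htRlo : η^2 * n ≤ (t:ℝ) := Nat.le_ceil _
  have htRhi : (t:ℝ) ≤ η^2 * n + 1 := (Nat.ceil_lt_add_one (by positivity)).le
  have hmain : c * (#A₀ : ℝ)^2 + (1 - c) * (t:ℝ)^2 + #A₀ ≤ (Wt G A₀ : ℝ) := by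
    have hkey := key_ineq (n:ℝ) (s:ℝ) (t:ℝ) η (p:ℝ) hpR hη0 hη1 hsRlo hsRhi htRlo htRhi
      hbig9 h2η
    rw [hA₀R]
    simp only [hc]
    have hexp : (1 - (1 - 1/(p:ℝ) + 2*η^2)) = 1/(p:ℝ) - 2*η^2 := by ring
    rw [hexp]
    linarith [hWA₀, hkey, heG]
  obtain ⟨B, hBA, hBgt, hBmin⟩ := extract G c t hc0 hclt1 ht1 A₀ hmain
  -- greedy clique building
  have hBpos : 0 < #B := by
    rcases Nat.eq_zero_or_pos #B with h | h
    · rw [h] at hBgt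
      have : (0:ℝ) ≤ t := Nat.cast_nonneg t
      push_cast at hBgt
      linarith
    · exact h
  have hgr := greedy G p hp1 c (by
      simp only [hc]
      have : (1 - (1 - 1/(p:ℝ) + 2*η^2)) * p = 1 - 2*η^2*p := by field_simp; ring
      rw [this]
      nlinarith [sq_nonneg η, hp0]) B hBpos hBmin p le_rfl
  obtain ⟨C, D, hCB, hDB, hCp, hclique, hCD, hDcard⟩ := hgr
  -- D is large: at least q vertices
  have hDq : q ≤ #D := by
    have h1 : (#B:ℝ) * (1 - p * (1 - c)) ≤ #D := hDcard
    have h2 : (1:ℝ) - p * (1 - c) = 2*η^2*p := by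
      simp only [hc]; field_simp; ring
    rw [h2] at h1
    have h3 : (t:ℝ) ≤ #B := hBgt.le
    have h4 : η^2 * n ≤ (#B:ℝ) := le_trans htRlo h3
    have hco : (0:ℝ) ≤ 2*η^2*(p:ℝ) := by positivity
    have h5 : (2*η^2*(p:ℝ)) * (η^2 * n) ≤ (#B:ℝ) * (2*η^2*p) :=
      calc (2*η^2*(p:ℝ)) * (η^2*n) ≤ (2*η^2*(p:ℝ)) * #B := mul_le_mul_of_nonneg_left h4 hco
        _ = (#B:ℝ) * (2*η^2*p) := by ring
    have h6 : (q:ℝ) ≤ 2*η^2*(p:ℝ) * (η^2*n) := by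
      have hmul : (2*(p:ℝ)) * (9000 * (p:ℝ)^3 * q) ≤ (2*(p:ℝ)) * (η^4*n) :=
        mul_le_mul_of_nonneg_left hbigN (by positivity)
      have hp4 : (1:ℝ) ≤ (p:ℝ)^4 := one_le_pow₀ (by linarith)
      have hqq : (q:ℝ) ≤ 18000*(p:ℝ)^4*q := by
        have h18 : (1:ℝ) ≤ 18000*(p:ℝ)^4 := by linarith
        calc (q:ℝ) = 1 * q := (one_mul _).symm
          _ ≤ 18000*(p:ℝ)^4*q :=
            mul_le_mul_of_nonneg_right h18 (Nat.cast_nonneg q)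
      have heq : 2*η^2*(p:ℝ) * (η^2*n) = (2*(p:ℝ))*(η^4*n) := by ring
      rw [heq]
      calc (q:ℝ) ≤ 18000*(p:ℝ)^4*q := hqq
        _ = (2*(p:ℝ)) * (9000 * (p:ℝ)^3 * q) := by ring
        _ ≤ (2*(p:ℝ))*(η^4*n) := hmul
    exact_mod_cast le_trans h6 (le_trans h5 h1)
  obtain ⟨Q, hQD, hQcard⟩ := Finset.exists_subset_card_eq hDq
  have hdisj : ∀ x ∈ Q, x ∉ C := by
    intro x hxQ hxC
    exact G.loopless.irrefl x (hCD x hxC x (hQD hxQ))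
  -- build the copy of B_{p,q}
  apply hfree
  let eC := C.orderIsoOfFin hCp
  let eQ := Q.orderIsoOfFin hQcard
  let f : Fin (p + q) → Fin n := fun i =>
    if h : (i:ℕ) < p then (eC ⟨i, h⟩ : Fin n)
    else (eQ ⟨(i:ℕ) - p, by have := i.isLt; omega⟩ : Fin n)
  have hfC : ∀ (i : Fin (p+q)) (h : (i:ℕ) < p), f i ∈ C ∧ f i = (eC ⟨i, h⟩ : Fin n) := by
    intro i h
    have : f i = (eC ⟨i, h⟩ : Fin n) := dif_pos h
    exact ⟨this ▸ (eC ⟨i, h⟩).2, this⟩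
  have hfQ : ∀ (i : Fin (p+q)) (h : ¬ (i:ℕ) < p),
      f i ∈ Q ∧ f i = (eQ ⟨(i:ℕ) - p, by have := i.isLt; omega⟩ : Fin n) := by
    intro i h
    have : f i = (eQ ⟨(i:ℕ) - p, by have := i.isLt; omega⟩ : Fin n) := dif_neg h
    exact ⟨this ▸ (eQ _).2, this⟩
  have hinj : Function.Injective f := by
    intro i j hij
    by_cases hi : (i:ℕ) < p <;> by_cases hj : (j:ℕ) < p
    · obtain ⟨_, hi2⟩ := hfC i hi
      obtain ⟨_, hj2⟩ := hfC j hj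
      rw [hi2, hj2] at hij
      have h1 := eC.injective (Subtype.coe_injective hij)
      have h2 : (i:ℕ) = (j:ℕ) := by simpa using h1
      exact Fin.ext h2
    · obtain ⟨hm, _⟩ := hfC i hi
      obtain ⟨hm', _⟩ := hfQ j hj
      exact absurd (hij ▸ hm) (hdisj _ hm')
    · obtain ⟨hm, _⟩ := hfQ i hi
      obtain ⟨hm', _⟩ := hfC j hj
      exact absurd hm' (hdisj _ (hij ▸ hm))
    · obtain ⟨_, hi2⟩ := hfQ i hi
      obtain ⟨_, hj2⟩ := hfQ j hj
      rw [hi2, hj2] at hij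
      have h1 := eQ.injective (Subtype.coe_injective hij)
      have h2 : (i:ℕ) - p = (j:ℕ) - p := by simpa using h1
      have hi3 := i.isLt
      have hj3 := j.isLt
      exact Fin.ext (by omega)
  refine ⟨f, hinj, ?_⟩
  intro a b hab
  have hab' : a ≠ b ∧ ((a:ℕ) < p ∨ (b:ℕ) < p) := hab
  obtain ⟨hne, hor⟩ := hab'
  by_cases ha : (a:ℕ) < p <;> by_cases hb : (b:ℕ) < p
  · exact hclique _ (hfC a ha).1 _ (hfC b hb).1 (fun h => hne (hinj h))
  · exact hCD _ (hfC a ha).1 _ (hQD (hfQ b hb).1)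
  · exact (hCD _ (hfC b hb).1 _ (hQD (hfQ a ha).1)).symm
  · exact absurd hor (by tauto)
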